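/- Let I be an ideal of a noetherian ring R and M any R-module. Then Ass_R(M/Γ_I(M)) = Ass_R(M) ∩ (Spec(R) \ V(I)), i.e., the associated primes of M/Γ_I(M) are exactly the associated primes of M that do not contain I. -/

import Mathlib

open CategoryTheory

universe u

/-- The `I`-torsion submodule `Γ_I(M)`. -/
def gammaTorsion {R : Type u} [CommRing R] (I : Ideal R) (M : Type u) [AddCommGroup M]
    [Module R M] : Submodule R M where
  carrier := {m | ∃ n : ℕ, ∀ r ∈ I ^ n, r • m = 0}
  zero_mem' := ⟨0, fun r _ => smul_zero r⟩
  add_mem' := by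
    rintro a b ⟨n, hn⟩ ⟨k, hk⟩
    refine ⟨n + k, fun r hr => ?_⟩
    rw [smul_add, hn r (Ideal.pow_le_pow_right (Nat.le_add_right n k) hr),
      hk r (Ideal.pow_le_pow_right (Nat.le_add_left k n) hr), add_zero]
  smul_mem' := by
    rintro c a ⟨n, hn⟩
    exact ⟨n, fun r hr => by rw [smul_comm, hn r hr, smul_zero]⟩

/-- The depth of `M` with respect to the ideal `I`: the supremum of the lengths of
regular sequences on `M` consisting of elements of `I`. -/
noncomputable def idealDepth {R : Type u} [CommRing R] (I : Ideal R) (M : Type u)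
    [AddCommGroup M] [Module R M] : ℕ∞ :=
  sSup {n : ℕ∞ | ∃ rs : List R, (rs.length : ℕ∞) = n ∧ (∀ r ∈ rs, r ∈ I) ∧
    RingTheory.Sequence.IsRegular M rs}

/-- The height of an ideal: the infimum of the heights of the primes containing it. -/
noncomputable def idealHeight {R : Type u} [CommRing R] (I : Ideal R) : ℕ∞ :=
  ⨅ p ∈ {p : PrimeSpectrum R | I ≤ p.asIdeal}, Order.height p

/-- A local Cohen–Macaulay ring: a noetherian local ring whose depth (of the maximal
ideal) equals its Krull dimension. -/
def IsCMLocalRing (R : Type u) [CommRing R] : Prop :=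
  IsNoetherianRing R ∧ ∃ _ : IsLocalRing R,
    (idealDepth (IsLocalRing.maximalIdeal R) R : WithBot ℕ∞) = ringKrullDim R

theorem uniform_exp {R : Type u} [CommRing R] [IsNoetherianRing R] (I : Ideal R)
    (M : Type u) [AddCommGroup M] [Module R M] (J : Ideal R) (m : M)
    (h : ∀ a ∈ J, a • m ∈ gammaTorsion I M) :
    ∃ n : ℕ, ∀ r ∈ I ^ n, ∀ a ∈ J, (r * a) • m = 0 := by
  obtain ⟨S, hS⟩ := (IsNoetherian.noetherian J : J.FG)
  classical
  have hmem : ∀ a ∈ S, a • m ∈ gammaTorsion I M := fun a ha =>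
    h a (hS ▸ Ideal.subset_span ha)
  choose! f hf using fun a (ha : a ∈ S) => hmem a ha
  refine ⟨S.sup f, fun r hr a haJ => ?_⟩
  rw [← hS] at haJ
  induction haJ using Submodule.span_induction with
  | mem x hx =>
      have := hf x hx r (Ideal.pow_le_pow_right (Finset.le_sup hx) hr)
      rwa [mul_smul]
  | zero => rw [mul_zero, zero_smul]
  | add x y _ _ hx hy => rw [mul_add, add_smul, hx, hy, add_zero]
  | smul c x _ hx =>
      rw [smul_eq_mul, ← mul_assoc, mul_comm r c, mul_assoc, mul_smul, hx, smul_zero]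

theorem stmt8 (R : Type u) [CommRing R] [IsNoetherianRing R] (I : Ideal R)
    (M : Type u) [AddCommGroup M] [Module R M] :
    associatedPrimes R (M ⧸ gammaTorsion I M) =
      associatedPrimes R M ∩ {p : Ideal R | ¬ I ≤ p} := by
  ext p
  simp only [Set.mem_inter_iff, Set.mem_setOf_eq, AssociatedPrimes.mem_iff, isAssociatedPrime_iff,
    Submodule.bot_colon']
  constructor
  · rintro ⟨hp, x, hx⟩
    obtain ⟨m, rfl⟩ := Submodule.Quotient.mk_surjective _ x
    have key : ∀ a, a ∈ (R ∙ (Submodule.Quotient.mk m : M ⧸ gammaTorsion I M)).annihilator ↔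
        a • m ∈ gammaTorsion I M := by
      intro a
      rw [Submodule.mem_annihilator_span_singleton, ← Submodule.Quotient.mk_smul,
        Submodule.Quotient.mk_eq_zero]
    have hIp : ¬ I ≤ p := by
      intro hIle
      obtain ⟨n, hn⟩ := uniform_exp I M I m fun a ha => (key a).mp (hx ▸ hIle ha)
      have hmΓ : m ∈ gammaTorsion I M := by
        refine ⟨n + 1, fun r hr => ?_⟩
        rw [pow_succ] at hr
        exact Submodule.mul_induction_on hr (fun x hx' y hy => hn x hx' y hy)
          (fun x y hx' hy' => by rw [add_smul, hx', hy', add_zero])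
      have : (Submodule.Quotient.mk m : M ⧸ gammaTorsion I M) = 0 :=
        (Submodule.Quotient.mk_eq_zero _).mpr hmΓ
      rw [this, Submodule.span_singleton_eq_bot.mpr rfl, Submodule.annihilator_bot] at hx
      exact hp.ne_top hx
    refine ⟨⟨hp, ?_⟩, hIp⟩
    obtain ⟨n, hn⟩ := uniform_exp I M p m fun a ha => (key a).mp (hx ▸ ha)
    have hpow : ¬ I ^ n ≤ p := by
      intro hle
      rcases Nat.eq_zero_or_pos n with rfl | hn0
      · exact hp.ne_top (top_le_iff.mp (by simpa using hle))
      · exact hIp ((Ideal.IsPrime.pow_le_iff hn0.ne').mp hle)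
    obtain ⟨s, hsI, hsp⟩ := SetLike.not_le_iff_exists.mp hpow
    refine ⟨s • m, ?_⟩
    ext r
    rw [Submodule.mem_annihilator_span_singleton]
    constructor
    · intro hr
      rw [smul_smul, mul_comm]
      exact hn s hsI r hr
    · intro hr
      rw [smul_smul] at hr
      have : r * s ∈ p := by
        rw [hx, key]
        exact hr ▸ (gammaTorsion I M).zero_mem
      exact (hp.mem_or_mem this).resolve_right hsp
  · rintro ⟨⟨hp, m, hm⟩, hIp⟩
    refine ⟨hp, Submodule.Quotient.mk m, ?_⟩
    ext r
    rw [Submodule.mem_annihilator_span_singleton, ← Submodule.Quotient.mk_smul,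
      Submodule.Quotient.mk_eq_zero]
    constructor
    · intro hr
      have : r • m = 0 := by
        have := hm ▸ hr
        rwa [Submodule.mem_annihilator_span_singleton] at this
      exact this ▸ (gammaTorsion I M).zero_mem
    · rintro ⟨k, hk⟩
      have hpow : ¬ I ^ k ≤ p := by
        intro hle
        rcases Nat.eq_zero_or_pos k with rfl | hk0
        · exact hp.ne_top (top_le_iff.mp (by simpa using hle))
        · exact hIp ((Ideal.IsPrime.pow_le_iff hk0.ne').mp hle)
      obtain ⟨s, hsI, hsp⟩ := SetLike.not_le_iff_exists.mp hpow
      have : s * r ∈ p := by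
        rw [hm, Submodule.mem_annihilator_span_singleton, mul_smul]
        exact hk s hsI
      exact (hp.mem_or_mem this).resolve_left hsp
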